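/- Let R be a commutative ring and P a GP-pure projective R-module. Then Ext^1_R(P, M) = 0 for every R-module M satisfying Ext^1_R(Q, M) = 0 for all Gorenstein projective R-modules Q; that is, P ∈ ^⊥(GP^⊥). -/

import Mathlib

open CategoryTheory Opposite Limits MonoidalCategory

universe u

variable {R : Type u} [CommRing R]

/-- `Q` is a Gorenstein projective module: it is the cokernel `Coker (P₁ → P₀)` of a totally
acyclic complex of projective modules, i.e. an exact complex of projectives which stays exact
under `Hom(-, P)` for every projective `P`. -/
def IsGorensteinProjective (Q : ModuleCat.{u} R) : Prop :=
  ∃ C : ChainComplex (ModuleCat.{u} R) ℤ,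
    (∀ i, Projective (C.X i)) ∧
    (∀ i, C.ExactAt i) ∧
    Nonempty (Q ≅ cokernel (C.d 1 0)) ∧
    ∀ P : ModuleCat.{u} R, Projective P →
      ∀ (i : ℤ) (f : C.X i ⟶ P), C.d (i + 1) i ≫ f = 0 →
        ∃ g : C.X (i - 1) ⟶ P, f = C.d i (i - 1) ≫ g

/-- `E` is a Gorenstein injective module: it is the kernel `Ker (I⁰ → I¹)` of a totally acyclic
complex of injective modules, i.e. an exact complex of injectives which stays exact under
`Hom(I, -)` for every injective `I`. -/
def IsGorensteinInjective (E : ModuleCat.{u} R) : Prop :=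
  ∃ C : CochainComplex (ModuleCat.{u} R) ℤ,
    (∀ i, Injective (C.X i)) ∧
    (∀ i, C.ExactAt i) ∧
    Nonempty (E ≅ kernel (C.d 0 1)) ∧
    ∀ I : ModuleCat.{u} R, Injective I →
      ∀ (i : ℤ) (f : I ⟶ C.X i), f ≫ C.d i (i + 1) = 0 →
        ∃ g : I ⟶ C.X (i - 1), f = g ≫ C.d (i - 1) i

/-- `M` is a Gorenstein flat module: it is a cokernel in an exact complex of flat modules which
remains exact after tensoring with any injective module. -/
def IsGorensteinFlat (M : ModuleCat.{u} R) : Prop :=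
  ∃ C : ChainComplex (ModuleCat.{u} R) ℤ,
    (∀ i, Module.Flat R (C.X i)) ∧
    (∀ i, C.ExactAt i) ∧
    Nonempty (M ≅ cokernel (C.d 1 0)) ∧
    ∀ I : ModuleCat.{u} R, Injective I → ∀ i : ℤ,
      (((tensorLeft I).mapHomologicalComplex (ComplexShape.down ℤ)).obj C).ExactAt i

/-- A short exact sequence `0 → X₁ → X₂ → X₃ → 0` is `𝒳`-pure exact if
`Hom(U, X₂) → Hom(U, X₃)` is surjective for every `U ∈ 𝒳`. -/
def XPureExact (𝒳 : ModuleCat.{u} R → Prop) (S : ShortComplex (ModuleCat.{u} R)) : Prop :=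
  ∀ U : ModuleCat.{u} R, 𝒳 U → ∀ φ : U ⟶ S.X₃, ∃ ψ : U ⟶ S.X₂, ψ ≫ S.g = φ

/-- A short exact sequence `0 → X₁ → X₂ → X₃ → 0` is `𝒳`-copure exact if
`Hom(X₂, V) → Hom(X₁, V)` is surjective for every `V ∈ 𝒳`. -/
def XCopureExact (𝒳 : ModuleCat.{u} R → Prop) (S : ShortComplex (ModuleCat.{u} R)) : Prop :=
  ∀ V : ModuleCat.{u} R, 𝒳 V → ∀ φ : S.X₁ ⟶ V, ∃ ψ : S.X₂ ⟶ V, S.f ≫ ψ = φ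

/-- `M` is `𝒳`-pure flat: `M ⊗ -` leaves every `𝒳`-pure exact short exact sequence exact. -/
def XPureFlat (𝒳 : ModuleCat.{u} R → Prop) (M : ModuleCat.{u} R) : Prop :=
  ∀ S : ShortComplex (ModuleCat.{u} R), S.ShortExact → XPureExact 𝒳 S →
    Function.Injective ((tensorLeft M).map S.f)

/-- `N` is `𝒳`-pure injective: `Hom(-, N)` leaves every `𝒳`-pure exact short exact
sequence exact. -/
def XPureInjective (𝒳 : ModuleCat.{u} R → Prop) (N : ModuleCat.{u} R) : Prop :=
  ∀ S : ShortComplex (ModuleCat.{u} R), S.ShortExact → XPureExact 𝒳 S →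
    ∀ φ : S.X₁ ⟶ N, ∃ ψ : S.X₂ ⟶ N, S.f ≫ ψ = φ

/-- `M` is `𝒳`-pure projective: `Hom(M, -)` leaves every `𝒳`-pure exact short exact
sequence exact. -/
def XPureProjective (𝒳 : ModuleCat.{u} R → Prop) (M : ModuleCat.{u} R) : Prop :=
  ∀ S : ShortComplex (ModuleCat.{u} R), S.ShortExact → XPureExact 𝒳 S →
    ∀ φ : M ⟶ S.X₃, ∃ ψ : M ⟶ S.X₂, ψ ≫ S.g = φ

/-- `GP`-pure exactness: `Hom(Q, -)` leaves the sequence exact for all Gorenstein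
projective `Q`. -/
abbrev GPPureExact (S : ShortComplex (ModuleCat.{u} R)) : Prop :=
  XPureExact IsGorensteinProjective S

/-- `GI`-copure exactness: `Hom(-, E)` leaves the sequence exact for all Gorenstein
injective `E`. -/
abbrev GICopureExact (S : ShortComplex (ModuleCat.{u} R)) : Prop :=
  XCopureExact IsGorensteinInjective S

abbrev GPPureProjective (M : ModuleCat.{u} R) : Prop :=
  XPureProjective IsGorensteinProjective M

abbrev GPPureInjective (M : ModuleCat.{u} R) : Prop :=
  XPureInjective IsGorensteinProjective M

abbrev GPPureFlat (M : ModuleCat.{u} R) : Prop :=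
  XPureFlat IsGorensteinProjective M

/-- `Ext^n_R(M, N)` vanishes. -/
abbrev extVanish (n : ℕ) (M N : ModuleCat.{u} R) : Prop :=
  Subsingleton (((Ext R (ModuleCat.{u} R) n).obj (op M)).obj N)

/-- `M` belongs to `GP^⊥`. -/
abbrev MemGPperp (M : ModuleCat.{u} R) : Prop :=
  ∀ Q : ModuleCat.{u} R, IsGorensteinProjective Q → extVanish 1 Q M

/-- `M` belongs to `^⊥GI`. -/
abbrev MemPerpGI (M : ModuleCat.{u} R) : Prop :=
  ∀ E : ModuleCat.{u} R, IsGorensteinInjective E → extVanish 1 M E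

/-- Gorenstein projective dimension of `M` is at most `n`: there is a resolution
`0 → G_n → ⋯ → G_0 → M → 0` by Gorenstein projective modules. -/
def GpdLE : ℕ → ModuleCat.{u} R → Prop
  | 0, M => IsGorensteinProjective M
  | n + 1, M =>
    ∃ S : ShortComplex (ModuleCat.{u} R), S.ShortExact ∧ Nonempty (S.X₃ ≅ M) ∧
      IsGorensteinProjective S.X₂ ∧ GpdLE n S.X₁

/-- Gorenstein injective dimension of `M` is at most `n`: there is a coresolution
`0 → M → E⁰ → ⋯ → Eⁿ → 0` by Gorenstein injective modules. -/
def GidLE : ℕ → ModuleCat.{u} R → Prop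
  | 0, M => IsGorensteinInjective M
  | n + 1, M =>
    ∃ S : ShortComplex (ModuleCat.{u} R), S.ShortExact ∧ Nonempty (S.X₁ ≅ M) ∧
      IsGorensteinInjective S.X₂ ∧ GidLE n S.X₃

/-- Gorenstein flat dimension of `M` is at most `n`. -/
def GfdLE : ℕ → ModuleCat.{u} R → Prop
  | 0, M => IsGorensteinFlat M
  | n + 1, M =>
    ∃ S : ShortComplex (ModuleCat.{u} R), S.ShortExact ∧ Nonempty (S.X₃ ≅ M) ∧
      IsGorensteinFlat S.X₂ ∧ GfdLE n S.X₁

/-- The Pontryagin dual `M⁺ = Hom_ℤ(M, ℚ/ℤ)` as an `R`-module. -/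
noncomputable def characterDual (M : ModuleCat.{u} R) : ModuleCat.{u} R :=
  ModuleCat.of R (CharacterModule M)

/-- `R` is a coherent ring: every finitely generated ideal is finitely presented. -/
def IsCoherentRing (R : Type u) [CommRing R] : Prop :=
  ∀ I : Ideal R, I.FG → Module.FinitePresentation R I

/-- `φ : G → M` is a Gorenstein projective precover. -/
def IsGPPrecover {G M : ModuleCat.{u} R} (φ : G ⟶ M) : Prop :=
  IsGorensteinProjective G ∧
    ∀ G' : ModuleCat.{u} R, IsGorensteinProjective G' →
      ∀ ψ : G' ⟶ M, ∃ χ : G' ⟶ G, χ ≫ φ = ψ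

/-- The short exact sequence `0 → Im d_{i+1} → X_i → Im d_i → 0` extracted from a complex. -/
noncomputable def imagesShortComplex (C : ChainComplex (ModuleCat.{u} R) ℤ) (i : ℤ) :
    ShortComplex (ModuleCat.{u} R) :=
  ShortComplex.mk (image.ι (C.d (i + 1) i)) (factorThruImage (C.d i (i - 1)))
    (by
      rw [← cancel_epi (factorThruImage (C.d (i + 1) i)),
        ← cancel_mono (image.ι (C.d i (i - 1)))]
      simp)

lemma subsingleton_of_isZero {N : ModuleCat.{u} R} (h : IsZero N) : Subsingleton N :=
  ⟨fun a b => by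
    have h0 : (𝟙 N : N ⟶ N) = 0 := h.eq_of_src _ _
    calc a = (𝟙 N : N ⟶ N) a := rfl
      _ = (0 : N ⟶ N) a := by rw [h0]
      _ = (0 : N ⟶ N) b := (LinearMap.zero_apply a).trans (LinearMap.zero_apply b).symm
      _ = (𝟙 N : N ⟶ N) b := by rw [h0]
      _ = b := rfl⟩

lemma extVanish_one_iff (X M : ModuleCat.{u} R) (P : ProjectiveResolution X) :
    extVanish 1 X M ↔
      ∀ f : P.complex.X 1 ⟶ M, P.complex.d 2 1 ≫ f = 0 →
        ∃ g : P.complex.X 0 ⟶ M, f = P.complex.d 1 0 ≫ g := by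
  have e := P.isoExt (R := R) 1 M
  have h1 : extVanish 1 X M ↔ Subsingleton ((P.complex.linearYonedaObj R M).homology 1) :=
    (Equiv.subsingleton_congr ((forget _).mapIso e).toEquiv)
  have h2 : Subsingleton ((P.complex.linearYonedaObj R M).homology 1) ↔
      (P.complex.linearYonedaObj R M).ExactAt 1 := by
    rw [HomologicalComplex.exactAt_iff_isZero_homology]
    constructor
    · intro h; exact ModuleCat.isZero_of_subsingleton _
    · exact subsingleton_of_isZero
  rw [h1, h2, HomologicalComplex.exactAt_iff' (P.complex.linearYonedaObj R M) 0 1 2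
    (by simp) (by simp),
    ShortComplex.moduleCat_exact_iff]
  simp only [HomologicalComplex.shortComplexFunctor'_obj_f,
    HomologicalComplex.shortComplexFunctor'_obj_g, ChainComplex.linearYonedaObj_d]
  constructor
  · intro h f hf
    obtain ⟨g, hg⟩ := h f hf
    exact ⟨g, hg.symm⟩
  · intro h f hf
    obtain ⟨g, hg⟩ := h f hf
    exact ⟨g, hg.symm⟩

lemma lift_of_extVanish (S : ShortComplex (ModuleCat.{u} R)) (hS : S.ShortExact)
    (Q : ModuleCat.{u} R) (h : extVanish 1 Q S.X₁) (φ : Q ⟶ S.X₃) :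
    ∃ ψ : Q ⟶ S.X₂, ψ ≫ S.g = φ := by
  have P : ProjectiveResolution Q := ProjectiveResolution.of Q
  rw [extVanish_one_iff Q S.X₁ P] at h
  have hmono := hS.mono_f
  have hepi := hS.epi_g
  have hd0 : P.complex.d 1 0 ≫ P.π.f 0 = 0 := P.complex_d_comp_π_f_zero
  -- lift π₀ ≫ φ through S.g using projectivity
  have h₀prop := Projective.factorThru_comp (P.π.f 0 ≫ φ) S.g
  set h₀ := Projective.factorThru (P.π.f 0 ≫ φ) S.g with hh₀
  have hz : (P.complex.d 1 0 ≫ h₀) ≫ S.g = 0 := by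
    rw [Category.assoc, h₀prop]
    exact (Category.assoc _ _ _).symm.trans ((congrArg (fun k => k ≫ φ) hd0).trans zero_comp)
  set f₁ := hS.exact.lift (P.complex.d 1 0 ≫ h₀) hz with hf₁
  have hf₁f : f₁ ≫ S.f = P.complex.d 1 0 ≫ h₀ := hS.exact.lift_f _ _
  have hd2 : P.complex.d 2 1 ≫ f₁ = 0 := by
    rw [← cancel_mono S.f, Category.assoc, hf₁f, zero_comp, ← Category.assoc,
      HomologicalComplex.d_comp_d, zero_comp]
  obtain ⟨g₁, hg₁⟩ := h f₁ hd2
  have hker : P.complex.d 1 0 ≫ (h₀ - g₁ ≫ S.f) = 0 := by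
    rw [Preadditive.comp_sub, ← Category.assoc, ← hg₁, hf₁f, sub_self]
  refine ⟨P.exact₀.desc (h₀ - g₁ ≫ S.f) hker, ?_⟩
  have hdesc := P.exact₀.g_desc (h₀ - g₁ ≫ S.f) hker
  refine (cancel_epi (P.π.f 0)).mp ?_
  refine (Category.assoc _ _ _).symm.trans ?_
  dsimp only at hdesc ⊢
  rw [hdesc, Preadditive.sub_comp, Category.assoc, h₀prop, S.zero, comp_zero, sub_zero]

theorem stmt3main (P : ModuleCat.{u} R)
    (hGP : ModuleCat.{u} R → Prop)
    (hP : ∀ S : ShortComplex (ModuleCat.{u} R), S.ShortExact →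
      (∀ U : ModuleCat.{u} R, hGP U → ∀ φ : U ⟶ S.X₃, ∃ ψ : U ⟶ S.X₂, ψ ≫ S.g = φ) →
      ∀ φ : P ⟶ S.X₃, ∃ ψ : P ⟶ S.X₂, ψ ≫ S.g = φ) :
    ∀ M : ModuleCat.{u} R, (∀ Q : ModuleCat.{u} R, hGP Q → extVanish 1 Q M) →
      extVanish 1 P M := by
  intro M hM
  have PR : ProjectiveResolution P := ProjectiveResolution.of P
  rw [extVanish_one_iff P M PR]
  intro f hf
  have hneg : ∀ (g : PR.complex.X 1 ⟶ M) (y), (-g) y = -g y := fun _ _ => rfl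
  have hπd : ∀ x, (PR.π.f 0) ((PR.complex.d 1 0) x) = 0 := fun x => by
    rw [show (PR.π.f 0) ((PR.complex.d 1 0) x) = (PR.complex.d 1 0 ≫ PR.π.f 0) x from rfl,
      PR.complex_d_comp_π_f_zero]
    rfl
  set t : ↑(PR.complex.X 1) →ₗ[R] ↑M × ↑(PR.complex.X 0) :=
    LinearMap.prod (-(f.hom : ↑(PR.complex.X 1) →ₗ[R] ↑M)) (PR.complex.d 1 0).hom with ht
  set E : ModuleCat.{u} R := ModuleCat.of R ((↑M × ↑(PR.complex.X 0)) ⧸ LinearMap.range t)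
    with hE
  set fS : M ⟶ E :=
    ModuleCat.ofHom ((LinearMap.range t).mkQ.comp (LinearMap.inl R ↑M ↑(PR.complex.X 0)))
    with hfS
  set gS : E ⟶ P := ModuleCat.ofHom ((LinearMap.range t).liftQ
      (((PR.π.f 0).hom : ↑(PR.complex.X 0) →ₗ[R] ↑P).comp (LinearMap.snd R ↑M ↑(PR.complex.X 0)))
      (by
        rintro ⟨m, a⟩ ⟨x, hx⟩
        have h2 : a = (PR.complex.d 1 0) x := congrArg Prod.snd hx.symm
        refine LinearMap.mem_ker.mpr ?_
        show (PR.π.f 0) a = 0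
        rw [h2]
        exact hπd x)) with hgS
  have hzero : fS ≫ gS = 0 := by
    ext m
    show (PR.π.f 0) 0 = 0
    exact (PR.π.f 0).hom.map_zero
  set S : ShortComplex (ModuleCat.{u} R) := ShortComplex.mk fS gS hzero with hS
  have hres1 : ∀ x, (PR.complex.d 1 0) x = 0 →
      ∃ y, (PR.complex.d 2 1) y = x := fun x hx =>
    (ShortComplex.moduleCat_exact_iff _).mp (PR.exact_succ 0) x hx
  have hres0 : ∀ a, (PR.π.f 0) a = 0 → ∃ x, (PR.complex.d 1 0) x = a := fun a ha =>
    (ShortComplex.moduleCat_exact_iff _).mp PR.exact₀ a ha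
  have hmono : Mono S.f := by
    rw [ModuleCat.mono_iff_injective]
    intro m₁ m₂ hm
    have hsub : fS (m₁ - m₂) = 0 := by
      rw [map_sub]
      change fS m₁ - fS m₂ = 0
      rw [hm, sub_self]
    have hmem : ((m₁ - m₂, 0) : ↑M × ↑(PR.complex.X 0)) ∈ LinearMap.range t := by
      rwa [← Submodule.Quotient.mk_eq_zero]
    obtain ⟨x, hx⟩ := hmem
    have h1 : -f x = m₁ - m₂ := by
      have := congrArg Prod.fst hx
      exact this
    have h2 : (PR.complex.d 1 0) x = 0 := congrArg Prod.snd hx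
    obtain ⟨y, hy⟩ := hres1 x h2
    have hfx : f x = 0 := by
      rw [← hy]
      simpa using congrArg (fun u : PR.complex.X 2 ⟶ M => u y) hf
    have : m₁ - m₂ = 0 := by rw [← h1, hfx, neg_zero]
    exact sub_eq_zero.mp this
  have hepi : Epi S.g := by
    rw [ModuleCat.epi_iff_surjective]
    intro p
    obtain ⟨a, ha⟩ := (ModuleCat.epi_iff_surjective (PR.π.f 0)).mp inferInstance p
    exact ⟨Submodule.Quotient.mk (0, a), ha⟩
  have hexact : S.Exact := by
    rw [ShortComplex.moduleCat_exact_iff]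
    intro e he
    obtain ⟨⟨m, a⟩, rfl⟩ := Submodule.Quotient.mk_surjective _ e
    have ha : (PR.π.f 0) a = 0 := he
    obtain ⟨x, hx⟩ := hres0 a ha
    refine ⟨m + f x, ?_⟩
    show Submodule.Quotient.mk (m + f x, 0) = Submodule.Quotient.mk (m, a)
    rw [Submodule.Quotient.eq]
    exact ⟨-x, by simp [ht, ← hx, Prod.ext_iff, hneg]⟩
  have hSE : S.ShortExact := { exact := hexact, mono_f := hmono, epi_g := hepi }
  obtain ⟨s, hs⟩ := hP S hSE (fun U hU φ => lift_of_extVanish S hSE U (hM U hU) φ) (𝟙 P)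
  have spl := ShortComplex.Splitting.ofExactOfSection S hexact s hs hmono
  set ιA : PR.complex.X 0 ⟶ E :=
    ModuleCat.ofHom ((LinearMap.range t).mkQ.comp (LinearMap.inr R ↑M ↑(PR.complex.X 0)))
    with hιA
  have key : PR.complex.d 1 0 ≫ ιA = f ≫ fS := by
    ext x
    show Submodule.Quotient.mk (0, (PR.complex.d 1 0) x) = Submodule.Quotient.mk (f x, 0)
    rw [Submodule.Quotient.eq]
    exact ⟨x, by simp [ht, Prod.ext_iff, hneg]⟩
  refine ⟨ιA ≫ spl.r, ?_⟩
  have hfr : f ≫ S.f ≫ spl.r = f := by rw [spl.f_r, Category.comp_id]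
  rw [← Category.assoc, key, Category.assoc]
  exact hfr.symm

/-- Every `GP`-pure projective module lies in `^⊥(GP^⊥)`. -/
theorem stmt3 {R : Type u} [CommRing R] (P : ModuleCat.{u} R)
    (hP : GPPureProjective P) :
    ∀ M : ModuleCat.{u} R, MemGPperp M → extVanish 1 P M :=
  fun M hM => stmt3main P IsGorensteinProjective hP M hM
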